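/- arXiv:1503.01545 — 2 statements merged into one kernel-verified Lean document; each statement's English description precedes it below -/
import Mathlib

section
/- Fix a prime p and r ≥ 1. Let g_p(m) be the number of tuples (s₁, …, s_r) of positive integers with s_j > p·s_{j+1} for all 1 ≤ j < r whose sum is m. Then the rate of growth of g_p is exactly r: there is K with g_p(m) ≤ K·m^{r−1} for all m, and for infinitely many m one has g_p(m) ≥ K'·m^{r−1} for some K' > 0. -/
open Finset

def Tset (p r m : ℕ) : Type := {s : Fin r → ℕ // (∀ i, 1 ≤ s i) ∧
        (∀ (j : ℕ) (h : j + 1 < r), p * s ⟨j + 1, h⟩ < s ⟨j, Nat.lt_of_succ_lt h⟩) ∧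
        ∑ i, s i = m}

-- upper bound injection
lemma Tset_inj (p k m : ℕ) : ∃ φ : Tset p (k+1) m → (Fin k → Fin (m+1)),
    Function.Injective φ := by
  refine ⟨fun s i => ⟨s.1 i.castSucc, ?_⟩, ?_⟩
  · have := Finset.single_le_sum (f := s.1) (fun i _ => Nat.zero_le _) (mem_univ i.castSucc)
    rw [s.2.2.2] at this
    omega
  · intro s t hst
    have hcs : ∀ i : Fin k, s.1 i.castSucc = t.1 i.castSucc := by
      intro i
      have := congrFun hst i
      exact congrArg Fin.val this
    have hsum : ∑ i : Fin k, s.1 i.castSucc + s.1 (Fin.last k)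
        = ∑ i : Fin k, t.1 i.castSucc + t.1 (Fin.last k) := by
      rw [← Fin.sum_univ_castSucc, ← Fin.sum_univ_castSucc, s.2.2.2, t.2.2.2]
    have hsum2 : ∑ i : Fin k, s.1 i.castSucc = ∑ i : Fin k, t.1 i.castSucc :=
      Finset.sum_congr rfl (fun i _ => hcs i)
    have hlast : s.1 (Fin.last k) = t.1 (Fin.last k) := by omega
    exact Subtype.ext (funext fun i => Fin.lastCases hlast hcs i)

instance Tset_finite (p k m : ℕ) : Finite (Tset p (k+1) m) := by
  obtain ⟨φ, hφ⟩ := Tset_inj p k m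
  exact Finite.of_injective φ hφ

lemma Tset_card_le (p k m : ℕ) : Nat.card (Tset p (k+1) m) ≤ (m+1)^k := by
  obtain ⟨φ, hφ⟩ := Tset_inj p k m
  calc Nat.card (Tset p (k+1) m) ≤ Nat.card (Fin k → Fin (m+1)) :=
        Nat.card_le_card_of_injective φ hφ
    _ = (m+1)^k := by simp [Nat.card_eq_fintype_card]

def Mconst (p k : ℕ) : ℕ :=
  p * ((2*(p+1))^(k-1) + 1) + k + ∑ j : Fin k, (2*(p+1))^(k-1-(j:ℕ))

lemma Tset_card_ge (p k x : ℕ) (hp : 2 ≤ p) (hx : 1 ≤ x) :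
    x ^ k ≤ Nat.card (Tset p (k+1) (Mconst p k * x)) := by
  set q := 2*(p+1) with hq
  -- the map
  have hψ : ∃ ψ : (Fin k → Fin x) → Tset p (k+1) (Mconst p k * x),
      Function.Injective ψ := by
    refine ⟨fun t => ⟨Fin.cons
      (p * (q^(k-1) + 1) * x + (k*x - ∑ j : Fin k, (t j : ℕ)))
      (fun j => q^(k-1-(j:ℕ)) * x + (t j : ℕ)), ?_, ?_, ?_⟩, ?_⟩
    · -- positivity
      intro i
      refine Fin.cases ?_ ?_ i
      · rw [Fin.cons_zero]
        have : 0 < p * (q^(k-1) + 1) * x :=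
          Nat.mul_pos (Nat.mul_pos (by omega) (by omega)) (by omega)
        omega
      · intro j
        rw [Fin.cons_succ]
        have : 0 < q^(k-1-(j:ℕ)) * x :=
          Nat.mul_pos (Nat.pow_pos (by omega)) (by omega)
        omega
    · -- chain condition
      intro j h
      match j, h with
      | 0, h =>
        have e0 : (⟨0, Nat.lt_of_succ_lt h⟩ : Fin (k+1)) = 0 := rfl
        have hk1 : 0 < k := by omega
        have e1 : (⟨1, h⟩ : Fin (k+1)) = Fin.succ ⟨0, hk1⟩ := rfl
        rw [e0, e1, Fin.cons_zero, Fin.cons_succ]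
        have ht : ((t ⟨0, hk1⟩ : ℕ)) < x := (t ⟨0, hk1⟩).isLt
        have e2 : k - 1 - ((⟨0, hk1⟩ : Fin k) : ℕ) = k - 1 := by simp
        rw [e2]
        have hpt : p * (t ⟨0, hk1⟩ : ℕ) < p * x :=
          mul_lt_mul_of_pos_left ht (by omega)
        nlinarith [Nat.zero_le (k*x - ∑ j : Fin k, (t j : ℕ))]
      | (j+1), h =>
        have hjk : j + 1 < k := by omega
        have hjk' : j < k := by omega
        have e1 : (⟨j+2, h⟩ : Fin (k+1)) = Fin.succ ⟨j+1, hjk⟩ := rfl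
        have e2 : (⟨j+1, Nat.lt_of_succ_lt h⟩ : Fin (k+1)) = Fin.succ ⟨j, hjk'⟩ := rfl
        rw [e1, e2, Fin.cons_succ, Fin.cons_succ]
        set e := k - 1 - (j+1) with he
        have hE : k - 1 - j = e + 1 := by omega
        have e3 : k - 1 - ((⟨j+1, hjk⟩ : Fin k) : ℕ) = e := rfl
        have e4 : k - 1 - ((⟨j, hjk'⟩ : Fin k) : ℕ) = e + 1 := by
          simpa using hE
        rw [e4, pow_succ]
        have ht : ((t ⟨j+1, hjk⟩ : ℕ)) < x := (t ⟨j+1, hjk⟩).isLt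
        have hQ : 1 ≤ q^e := Nat.one_le_pow _ _ (by omega)
        have hpt : p * (t ⟨j+1, hjk⟩ : ℕ) < p * x :=
          mul_lt_mul_of_pos_left ht (by omega)
        have hZ : 0 < q^e * x := Nat.mul_pos (by omega) (by omega)
        have h2 : p * x ≤ p * (q^e * x) :=
          Nat.mul_le_mul_left p (Nat.le_mul_of_pos_left x (by omega))
        calc p * (q^e * x + (t ⟨j+1, hjk⟩ : ℕ))
            = p*(q^e*x) + p*(t ⟨j+1, hjk⟩ : ℕ) := by ring
          _ < p*(q^e*x) + p*(q^e*x) := by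
              have := lt_of_lt_of_le hpt h2; omega
          _ = 2*p*(q^e*x) := by ring
          _ < 2*(p+1)*(q^e*x) :=
              mul_lt_mul_of_pos_right (by omega) hZ
          _ = q^e*q*x := by rw [hq]; ring
          _ ≤ q^e*q*x + (t ⟨j, hjk'⟩ : ℕ) := Nat.le_add_right _ _
    · -- sum
      rw [Fin.sum_cons]
      have hsplit : ∑ j : Fin k, (q^(k-1-(j:ℕ)) * x + (t j : ℕ))
          = (∑ j : Fin k, q^(k-1-(j:ℕ))) * x + ∑ j : Fin k, (t j : ℕ) := by
        rw [Finset.sum_add_distrib, Finset.sum_mul]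
      rw [hsplit]
      have hT : ∑ j : Fin k, (t j : ℕ) ≤ k * x := by
        calc ∑ j : Fin k, (t j : ℕ) ≤ ∑ _j : Fin k, x :=
              Finset.sum_le_sum (fun j _ => le_of_lt (t j).isLt)
          _ = k * x := by simp [mul_comm]
      rw [Mconst, ← hq]
      set A := p * (q^(k-1) + 1)
      set S := ∑ j : Fin k, q^(k-1-(j:ℕ))
      set T := ∑ j : Fin k, (t j : ℕ)
      have : A * x + (k*x - T) + (S * x + T) = A*x + k*x + S*x := by omega
      rw [this]; ring
    · -- injectivity
      intro t t' htt
      have hv := congrArg Subtype.val htt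
      funext j
      have := congrFun hv j.succ
      simp only [Fin.cons_succ] at this
      have : (t j : ℕ) = (t' j : ℕ) := by omega
      exact Fin.ext this
  obtain ⟨ψ, hinj⟩ := hψ
  calc x ^ k = Nat.card (Fin k → Fin x) := by simp [Nat.card_eq_fintype_card]
    _ ≤ Nat.card (Tset p (k+1) (Mconst p k * x)) :=
        Nat.card_le_card_of_injective ψ hinj

/-- The combinatorial core of `γ(H_•(Σ_{p^r}, Lie(p^r))) = r`: the counting function
`g_p` of completely inadmissible exponent sequences of length `r` has rate of growth
exactly `r`: `g_p(m) ≤ K·m^{r−1}` for all `m ≥ 1`, and `g_p(m) ≥ K'·m^{r−1}` for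
infinitely many `m`, for some `K' > 0`. -/
theorem stmt15 (p r : ℕ) (hp : p.Prime) (hr : 1 ≤ r)
    (g : ℕ → ℕ)
    (hg : ∀ m : ℕ, g m =
      Nat.card {s : Fin r → ℕ // (∀ i, 1 ≤ s i) ∧
        (∀ (j : ℕ) (h : j + 1 < r), p * s ⟨j + 1, h⟩ < s ⟨j, Nat.lt_of_succ_lt h⟩) ∧
        ∑ i, s i = m}) :
    (∃ K : ℕ, 0 < K ∧ ∀ m : ℕ, 1 ≤ m → g m ≤ K * m ^ (r - 1)) ∧
      ∃ K' : ℝ, 0 < K' ∧ {m : ℕ | K' * (m : ℝ) ^ (r - 1) ≤ (g m : ℝ)}.Infinite := by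
  obtain ⟨k, rfl⟩ : ∃ k, r = k + 1 := ⟨r - 1, (Nat.succ_pred_eq_of_pos hr).symm⟩
  have hg' : ∀ m, g m = Nat.card (Tset p (k+1) m) := hg
  have hp2 : 2 ≤ p := hp.two_le
  constructor
  · refine ⟨2^k, Nat.pow_pos (by omega), fun m hm => ?_⟩
    simp only [Nat.add_sub_cancel]
    rw [hg']
    calc Nat.card (Tset p (k+1) m) ≤ (m+1)^k := Tset_card_le p k m
      _ ≤ (2*m)^k := Nat.pow_le_pow_left (by omega) k
      _ = 2^k * m^k := mul_pow 2 m k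
  · have hM : 0 < Mconst p k := by
      have := Nat.mul_pos (show 0 < p by omega)
        (show 0 < (2*(p+1))^(k-1)+1 by omega)
      unfold Mconst; omega
    refine ⟨1 / (Mconst p k : ℝ)^k, by positivity, ?_⟩
    apply Set.infinite_of_injective_forall_mem
      (f := fun n : ℕ => Mconst p k * (n+1))
    · intro a b hab
      simp only at hab
      have := Nat.eq_of_mul_eq_mul_left hM hab
      omega
    · intro n
      simp only [Set.mem_setOf_eq, Nat.add_sub_cancel]
      have hle : (n+1)^k ≤ g (Mconst p k * (n+1)) := by
        rw [hg']; exact Tset_card_ge p k (n+1) hp2 (by omega)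
      have hMr : (0:ℝ) < (Mconst p k : ℝ) := by exact_mod_cast hM
      have hcalc : 1 / (Mconst p k : ℝ)^k * ((Mconst p k * (n+1) : ℕ) : ℝ)^k
          = (((n+1 : ℕ)) : ℝ)^k := by
        push_cast
        rw [mul_pow]
        field_simp
      rw [hcalc]
      exact_mod_cast hle
end

section
/- Fix a prime p. Define f : ℕ → ℕ by f(r) = the rate of growth of the sequence m ↦ #{(s₁,…,s_r) ∈ (ℤ_{>0})^r : s_j > p·s_{j+1} for all j < r, Σ s_j = m} (with f(0) = 0, corresponding to the one-dimensional homology in degree 0). Then for any n ≥ 1 with p-adic valuation t, max_{0 ≤ r ≤ t} f(r) = t. -/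
open Finset

lemma elt_finite (p r m : ℕ) :
    Finite {s : Fin r → ℕ // (∀ i, 1 ≤ s i) ∧
      (∀ (j : ℕ) (h : j + 1 < r), p * s ⟨j + 1, h⟩ < s ⟨j, Nat.lt_of_succ_lt h⟩) ∧
      ∑ i, s i = m} := by
  have hle : ∀ (s : {s : Fin r → ℕ // (∀ i, 1 ≤ s i) ∧
      (∀ (j : ℕ) (h : j + 1 < r), p * s ⟨j + 1, h⟩ < s ⟨j, Nat.lt_of_succ_lt h⟩) ∧
      ∑ i, s i = m}) (i : Fin r), s.1 i < m + 1 := by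
    intro s i
    have h1 := Finset.single_le_sum (f := s.1) (fun j _ => Nat.zero_le _) (Finset.mem_univ i)
    have h2 := s.2.2.2
    omega
  apply Finite.of_injective (fun s => (fun i => (⟨s.1 i, hle s i⟩ : Fin (m+1)) : Fin r → Fin (m+1)))
  intro s t h
  apply Subtype.ext
  funext i
  exact congrArg Fin.val (congrFun h i)

lemma elt_upper (p q m : ℕ) (hm : 1 ≤ m) :
    Nat.card {s : Fin (q+1) → ℕ // (∀ i, 1 ≤ s i) ∧
      (∀ (j : ℕ) (h : j + 1 < q + 1), p * s ⟨j + 1, h⟩ < s ⟨j, Nat.lt_of_succ_lt h⟩) ∧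
      ∑ i, s i = m} ≤ m ^ q := by
  have hle : ∀ (s : {s : Fin (q+1) → ℕ // (∀ i, 1 ≤ s i) ∧
      (∀ (j : ℕ) (h : j + 1 < q + 1), p * s ⟨j + 1, h⟩ < s ⟨j, Nat.lt_of_succ_lt h⟩) ∧
      ∑ i, s i = m}) (i : Fin (q+1)), s.1 i ≤ m := by
    intro s i
    have h1 := Finset.single_le_sum (f := s.1) (fun j _ => Nat.zero_le _) (Finset.mem_univ i)
    have h2 := s.2.2.2
    omega
  have key : Nat.card {s : Fin (q+1) → ℕ // (∀ i, 1 ≤ s i) ∧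
      (∀ (j : ℕ) (h : j + 1 < q + 1), p * s ⟨j + 1, h⟩ < s ⟨j, Nat.lt_of_succ_lt h⟩) ∧
      ∑ i, s i = m} ≤ Nat.card (Fin q → Fin m) := by
    apply Nat.card_le_card_of_injective
      (fun s => (fun i => (⟨s.1 i.castSucc - 1, by
        have h1 := hle s i.castSucc
        have h2 := s.2.1 i.castSucc
        omega⟩ : Fin m) : Fin q → Fin m))
    intro s t h
    have hcs : ∀ i : Fin q, s.1 i.castSucc = t.1 i.castSucc := by
      intro i
      have h1 := congrArg Fin.val (congrFun h i)
      simp only at h1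
      have h2 := s.2.1 i.castSucc
      have h3 := t.2.1 i.castSucc
      omega
    have hsum : ∀ (u : {s : Fin (q+1) → ℕ // (∀ i, 1 ≤ s i) ∧
      (∀ (j : ℕ) (h : j + 1 < q + 1), p * s ⟨j + 1, h⟩ < s ⟨j, Nat.lt_of_succ_lt h⟩) ∧
      ∑ i, s i = m}), (∑ i : Fin q, u.1 i.castSucc) + u.1 (Fin.last q) = m := by
      intro u
      rw [← Fin.sum_univ_castSucc]
      exact u.2.2.2
    have hlast : s.1 (Fin.last q) = t.1 (Fin.last q) := by
      have h1 := hsum s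
      have h2 := hsum t
      have h3 : (∑ i : Fin q, s.1 i.castSucc) = ∑ i : Fin q, t.1 i.castSucc :=
        Finset.sum_congr rfl (fun i _ => hcs i)
      omega
    apply Subtype.ext
    funext k
    induction k using Fin.lastCases with
    | last => exact hlast
    | cast i => exact hcs i
  calc _ ≤ Nat.card (Fin q → Fin m) := key
    _ = m ^ q := by simp [Nat.card_eq_fintype_card]

lemma elt_lower (p : ℕ) (hp : 1 ≤ p) (q N : ℕ) (hN : 1 ≤ N) :
    N ^ q ≤ Nat.card {s : Fin (q+1) → ℕ // (∀ i, 1 ≤ s i) ∧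
      (∀ (j : ℕ) (h : j + 1 < q + 1), p * s ⟨j + 1, h⟩ < s ⟨j, Nat.lt_of_succ_lt h⟩) ∧
      ∑ i, s i = (q * (q + p) * p ^ q + 1) * N} := by
  classical
  haveI := elt_finite p (q+1) ((q * (q + p) * p ^ q + 1) * N)
  set m := (q * (q + p) * p ^ q + 1) * N with hm
  -- auxiliary data from a parameter tuple x
  set y : (Fin q → Fin N) → ℕ → ℕ :=
    fun x j => if h : j < q then (x ⟨j, h⟩ : ℕ) + 1 else 0 with hy
  set S : (Fin q → Fin N) → ℕ → ℕ :=
    fun x i => ∑ j ∈ Finset.Ico i q, p ^ (j - i) * y x j with hS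
  have hyle : ∀ x j, y x j ≤ N := by
    intro x j
    rw [hy]
    dsimp only
    split
    · have := (x ⟨j, by assumption⟩).2; omega
    · omega
  have hy1 : ∀ x j, j < q → 1 ≤ y x j := by
    intro x j hj
    rw [hy]; dsimp only; rw [dif_pos hj]; omega
  have hrec : ∀ x i, i < q → S x i = y x i + p * S x (i + 1) := by
    intro x i hi
    rw [hS]
    dsimp only
    rw [Finset.sum_eq_sum_Ico_succ_bot hi]
    simp only [Nat.sub_self, pow_zero, one_mul]
    congr 1
    rw [Finset.mul_sum]
    apply Finset.sum_congr rfl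
    intro j hj
    rw [Finset.mem_Ico] at hj
    have h1 : j - i = (j - (i + 1)) + 1 := by omega
    rw [h1, pow_succ]
    ring
  have hSq : ∀ x, S x q = 0 := by
    intro x; rw [hS]; simp
  have hSle : ∀ x i, S x i ≤ q * (p ^ q * N) := by
    intro x i
    rw [hS]
    dsimp only
    calc ∑ j ∈ Finset.Ico i q, p ^ (j - i) * y x j
        ≤ ∑ j ∈ Finset.Ico i q, p ^ q * N := by
          apply Finset.sum_le_sum
          intro j hj
          rw [Finset.mem_Ico] at hj
          exact Nat.mul_le_mul (Nat.pow_le_pow_right hp (by omega)) (hyle x j)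
      _ = (q - i) * (p ^ q * N) := by rw [Finset.sum_const, Nat.card_Ico, smul_eq_mul]
      _ ≤ q * (p ^ q * N) := Nat.mul_le_mul_right _ (by omega)
  have hS1 : ∀ x i, i < q → 1 ≤ S x i := by
    intro x i hi
    have := hrec x i hi
    have := hy1 x i hi
    omega
  set T : (Fin q → Fin N) → ℕ := fun x => ∑ i ∈ Finset.range q, S x i with hT
  have hTle : ∀ x, T x ≤ q * (q * (p ^ q * N)) := by
    intro x
    rw [hT]
    dsimp only
    calc ∑ i ∈ Finset.range q, S x i ≤ ∑ i ∈ Finset.range q, q * (p ^ q * N) :=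
          Finset.sum_le_sum (fun i _ => hSle x i)
      _ = q * (q * (p ^ q * N)) := by rw [Finset.sum_const, Finset.card_range, smul_eq_mul]
  have hmain : ∀ x, T x + p * S x 0 < m := by
    intro x
    have h1 : T x + p * S x 0 ≤ q * (q * (p ^ q * N)) + p * (q * (p ^ q * N)) :=
      add_le_add (hTle x) (Nat.mul_le_mul_left p (hSle x 0))
    have h2 : q * (q * (p ^ q * N)) + p * (q * (p ^ q * N)) = q * (q + p) * p ^ q * N := by
      ring
    have h3 : m = q * (q + p) * p ^ q * N + N := by rw [hm]; ring
    omega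
  -- the injection
  set s : (Fin q → Fin N) → Fin (q + 1) → ℕ :=
    fun x => Fin.cons (m - T x) (fun i : Fin q => S x i) with hsdef
  have hs0 : ∀ x, s x 0 = m - T x := by intro x; rw [hsdef]; simp
  have hssucc : ∀ x (j : ℕ) (h : j + 1 < q + 1), s x ⟨j + 1, h⟩ = S x j := by
    intro x j h
    have he : (⟨j + 1, h⟩ : Fin (q + 1)) = Fin.succ ⟨j, by omega⟩ := rfl
    simp only [hsdef, he, Fin.cons_succ]
  have hprop : ∀ x, (∀ i, 1 ≤ s x i) ∧
      (∀ (j : ℕ) (h : j + 1 < q + 1), p * s x ⟨j + 1, h⟩ < s x ⟨j, Nat.lt_of_succ_lt h⟩) ∧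
      ∑ i, s x i = m := by
    intro x
    refine ⟨?_, ?_, ?_⟩
    · intro i
      induction i using Fin.cases with
      | zero =>
        rw [hs0]
        have := hmain x
        omega
      | succ j =>
        have : s x j.succ = S x ↑j := by simp only [hsdef, Fin.cons_succ]
        rw [this]
        exact hS1 x j j.2
    · intro j h
      rw [hssucc x j h]
      match j, h with
      | 0, h =>
        have h0 : (⟨0, Nat.lt_of_succ_lt h⟩ : Fin (q + 1)) = 0 := rfl
        rw [h0, hs0]
        have := hmain x
        omega
      | (i+1), h =>
        rw [hssucc x i (Nat.lt_of_succ_lt h)]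
        have h1 := hrec x i (by omega)
        have h2 := hy1 x i (by omega)
        omega
    · rw [hsdef]
      rw [Fin.sum_cons]
      have h1 : ∑ i : Fin q, S x ↑i = T x := by
        rw [hT]; exact Fin.sum_univ_eq_sum_range (fun i => S x i) q
      rw [h1]
      have := hmain x
      omega
  have hinj : Function.Injective
      (fun x : Fin q → Fin N =>
        (⟨s x, hprop x⟩ : {s : Fin (q+1) → ℕ // (∀ i, 1 ≤ s i) ∧
          (∀ (j : ℕ) (h : j + 1 < q + 1), p * s ⟨j + 1, h⟩ < s ⟨j, Nat.lt_of_succ_lt h⟩) ∧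
          ∑ i, s i = m})) := by
    intro x x' h
    have hs' : s x = s x' := congrArg Subtype.val h
    have hSeq : ∀ i, i ≤ q → S x i = S x' i := by
      intro i hi
      rcases Nat.lt_or_ge i q with hlt | hge
      · have h1 : s x ⟨i + 1, by omega⟩ = s x' ⟨i + 1, by omega⟩ := by rw [hs']
        rwa [hssucc, hssucc] at h1
      · have : i = q := by omega
        rw [this, hSq, hSq]
    funext i
    have hi := i.2
    have r1 := hrec x i hi
    have r2 := hrec x' i hi
    have e1 := hSeq i (le_of_lt hi)
    have e2 := hSeq ((i : ℕ) + 1) hi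
    rw [e2] at r1
    have hyeq : y x i = y x' i := by omega
    rw [hy] at hyeq
    simp only [dif_pos hi] at hyeq
    apply Fin.ext
    have hxi : (⟨(i : ℕ), hi⟩ : Fin q) = i := rfl
    rw [hxi] at hyeq
    omega
  calc N ^ q = Nat.card (Fin q → Fin N) := by simp [Nat.card_eq_fintype_card]
    _ ≤ _ := Nat.card_le_card_of_injective _ hinj


/-- Let `f r` be the rate of growth of the sequence counting completely inadmissible
exponent tuples of length `r` (with `f 0 = 0`).  Then `f r = r` for every `r`, and
consequently for any `n ≥ 1` with `p`-adic valuation `t` we have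
`max_{0 ≤ r ≤ t} f(r) = t` — the Erdmann–Lim–Tan conjecture
`c_{Σ_n}(Lie(n)) = t` follows. -/
theorem stmt19 (p : ℕ) (hp : p.Prime)
    (g : ℕ → ℕ → ℕ)
    (hg : ∀ r m : ℕ, g r m =
      Nat.card {s : Fin r → ℕ // (∀ i, 1 ≤ s i) ∧
        (∀ (j : ℕ) (h : j + 1 < r), p * s ⟨j + 1, h⟩ < s ⟨j, Nat.lt_of_succ_lt h⟩) ∧
        ∑ i, s i = m})
    (f : ℕ → ℕ) (hf0 : f 0 = 0)
    (hf : ∀ r : ℕ, 1 ≤ r →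
      IsLeast {c : ℕ | 0 < c ∧ ∃ K : ℕ, 0 < K ∧ ∀ m : ℕ, 1 ≤ m → g r m ≤ K * m ^ (c - 1)} (f r)) :
    ∀ n : ℕ, 1 ≤ n → (Finset.range (padicValNat p n + 1)).sup f = padicValNat p n := by
  have hp1 : 1 ≤ p := hp.one_lt.le
  -- f r = r for every r
  have hfr : ∀ r : ℕ, f r = r := by
    intro r
    rcases Nat.eq_zero_or_pos r with hr0 | hr1
    · rw [hr0, hf0]
    · obtain ⟨hmem, hlb⟩ := hf r hr1
      obtain ⟨q, rfl⟩ : ∃ q, r = q + 1 := ⟨r - 1, by omega⟩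
      -- upper bound: f (q+1) ≤ q+1
      have hub : f (q + 1) ≤ q + 1 := by
        apply hlb
        refine ⟨by omega, 1, one_pos, ?_⟩
        intro m hm
        rw [hg, one_mul]
        have h := elt_upper p q m hm
        simpa using h
      -- lower bound: q + 1 ≤ f (q+1)
      have hlbr : q + 1 ≤ f (q + 1) := by
        by_contra hcon
        push_neg at hcon
        obtain ⟨hc, K, hK, hbound⟩ := hmem
        set C := q * (q + p) * p ^ q + 1 with hC
        set N := K * C ^ (q - 1) + 1 with hN
        have hN1 : 1 ≤ N := by omega
        have hC1 : 1 ≤ C := by omega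
        have hm1 : 1 ≤ C * N := Nat.one_le_iff_ne_zero.2 (by positivity)
        have h1 : N ^ q ≤ g (q + 1) (C * N) := by
          rw [hg]
          exact elt_lower p hp1 q N hN1
        have h2 : g (q + 1) (C * N) ≤ K * (C * N) ^ (f (q + 1) - 1) := hbound _ hm1
        have h3 : (C * N) ^ (f (q + 1) - 1) ≤ (C * N) ^ (q - 1) :=
          Nat.pow_le_pow_right hm1 (by omega)
        have h4 : N ^ q ≤ K * (C ^ (q - 1) * N ^ (q - 1)) := by
          calc N ^ q ≤ K * (C * N) ^ (f (q + 1) - 1) := le_trans h1 h2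
            _ ≤ K * (C * N) ^ (q - 1) := Nat.mul_le_mul_left K h3
            _ = K * (C ^ (q - 1) * N ^ (q - 1)) := by rw [mul_pow]
        have hq1 : 1 ≤ q := by omega
        have h5 : N ^ q = N ^ (q - 1) * N := by
          conv_lhs => rw [show q = (q - 1) + 1 by omega]
          rw [pow_succ]
        rw [h5] at h4
        have h6 : N ^ (q - 1) * N ≤ N ^ (q - 1) * (K * C ^ (q - 1)) := by
          calc N ^ (q - 1) * N ≤ K * (C ^ (q - 1) * N ^ (q - 1)) := h4
            _ = N ^ (q - 1) * (K * C ^ (q - 1)) := by ring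
        have h7 : N ≤ K * C ^ (q - 1) :=
          Nat.le_of_mul_le_mul_left h6 (Nat.pow_pos (by omega))
        omega
      omega
  intro n hn
  apply le_antisymm
  · apply Finset.sup_le
    intro r hr
    rw [Finset.mem_range] at hr
    rw [hfr]
    omega
  · calc padicValNat p n = f (padicValNat p n) := (hfr _).symm
      _ ≤ _ := Finset.le_sup (Finset.mem_range.2 (Nat.lt_succ_self _))
end
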